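/- arXiv:2408.06562 — 5 statements merged into one kernel-verified Lean document; each statement's English description precedes it below -/
import Mathlib

section
/- The quaternion algebra B₆ over ℚ with basis 1, I, J, K satisfying I² = 3, J² = −1, K = IJ = −JI is a division algebra: every nonzero element of B₆ is invertible. -/
open Quaternion

private lemma zmod3_aux (a b : ZMod 3) (h : a ^ 2 + b ^ 2 = 0) : a = 0 ∧ b = 0 := by
  revert h; revert a b; decide

private lemma descent : ∀ n : ℕ, ∀ r j i k : ℤ,
    (r ^ 2 + j ^ 2 + i ^ 2 + k ^ 2).toNat ≤ n →
    r ^ 2 + j ^ 2 = 3 * (i ^ 2 + k ^ 2) → r = 0 ∧ j = 0 ∧ i = 0 ∧ k = 0 := by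
  intro n
  induction n using Nat.strong_induction_on with
  | _ n IH =>
    intro r j i k hle h
    have hr3 : (3 : ℤ) ∣ r ∧ (3 : ℤ) ∣ j := by
      have hz : (r : ZMod 3) ^ 2 + (j : ZMod 3) ^ 2 = 0 := by
        have h3 := congrArg (fun z : ℤ => (z : ZMod 3)) h
        push_cast at h3
        rw [h3, show (3 : ZMod 3) = 0 by decide, zero_mul]
      obtain ⟨h1, h2⟩ := zmod3_aux _ _ hz
      constructor <;> rwa [ZMod.intCast_zmod_eq_zero_iff_dvd] at *
    obtain ⟨⟨r', hr⟩, ⟨j', hj⟩⟩ := hr3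
    subst hr hj
    rcases eq_or_ne (r' ^ 2 + j' ^ 2) 0 with h0 | h0
    · -- then i^2 + k^2 = 0 too
      have hr0 : r' = 0 ∧ j' = 0 := by
        constructor <;> nlinarith [sq_nonneg r', sq_nonneg j']
      have hik : i = 0 ∧ k = 0 := by
        constructor <;> nlinarith [sq_nonneg i, sq_nonneg k, hr0.1, hr0.2]
      exact ⟨by rw [hr0.1]; ring, by rw [hr0.2]; ring, hik.1, hik.2⟩
    · have h' : i ^ 2 + k ^ 2 = 3 * (r' ^ 2 + j' ^ 2) := by nlinarith
      have hpos : 0 < r' ^ 2 + j' ^ 2 := by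
        rcases (lt_or_eq_of_le (by positivity : (0:ℤ) ≤ r' ^ 2 + j' ^ 2)) with h1 | h1
        · exact h1
        · exact absurd h1.symm h0
      have hlt : (i ^ 2 + k ^ 2 + r' ^ 2 + j' ^ 2).toNat <
          ((3*r') ^ 2 + (3*j') ^ 2 + i ^ 2 + k ^ 2).toNat := by
        have : i ^ 2 + k ^ 2 + r' ^ 2 + j' ^ 2 <
            (3*r') ^ 2 + (3*j') ^ 2 + i ^ 2 + k ^ 2 := by nlinarith
        omega
      have hm : (i ^ 2 + k ^ 2 + r' ^ 2 + j' ^ 2).toNat < n := lt_of_lt_of_le hlt hle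
      obtain ⟨hi, hk, hr', hj'⟩ := IH _ hm i k r' j' le_rfl h'
      exact ⟨by rw [hr']; ring, by rw [hj']; ring, hi, hk⟩

private lemma rat_descent (r j i k : ℚ) (h : r ^ 2 + j ^ 2 = 3 * (i ^ 2 + k ^ 2)) :
    r = 0 ∧ j = 0 ∧ i = 0 ∧ k = 0 := by
  set N : ℚ := (r.den : ℚ) * j.den * i.den * k.den with hN
  have hNne : N ≠ 0 := by
    rw [hN]
    exact mul_ne_zero (mul_ne_zero (mul_ne_zero
      (Nat.cast_ne_zero.mpr r.den_nz) (Nat.cast_ne_zero.mpr j.den_nz))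
      (Nat.cast_ne_zero.mpr i.den_nz)) (Nat.cast_ne_zero.mpr k.den_nz)
  set R : ℤ := r.num * (j.den * i.den * k.den) with hR
  set J : ℤ := j.num * (r.den * i.den * k.den) with hJ
  set I : ℤ := i.num * (r.den * j.den * k.den) with hI
  set K : ℤ := k.num * (r.den * j.den * i.den) with hK
  have hRQ : (R : ℚ) = r * N := by
    have hd : (r.den : ℚ) * r = (r.num : ℚ) := by
      rw [mul_comm]; exact_mod_cast Rat.mul_den_eq_num r
    rw [hR, hN]
    push_cast
    linear_combination (-((j.den:ℚ) * i.den * k.den)) * hd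
  have hJQ : (J : ℚ) = j * N := by
    have hd : (j.den : ℚ) * j = (j.num : ℚ) := by
      rw [mul_comm]; exact_mod_cast Rat.mul_den_eq_num j
    rw [hJ, hN]
    push_cast
    linear_combination (-((r.den:ℚ) * i.den * k.den)) * hd
  have hIQ : (I : ℚ) = i * N := by
    have hd : (i.den : ℚ) * i = (i.num : ℚ) := by
      rw [mul_comm]; exact_mod_cast Rat.mul_den_eq_num i
    rw [hI, hN]
    push_cast
    linear_combination (-((r.den:ℚ) * j.den * k.den)) * hd
  have hKQ : (K : ℚ) = k * N := by
    have hd : (k.den : ℚ) * k = (k.num : ℚ) := by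
      rw [mul_comm]; exact_mod_cast Rat.mul_den_eq_num k
    rw [hK, hN]
    push_cast
    linear_combination (-((r.den:ℚ) * j.den * i.den)) * hd
  have hint : R ^ 2 + J ^ 2 = 3 * (I ^ 2 + K ^ 2) := by
    have : (R : ℚ) ^ 2 + (J : ℚ) ^ 2 = 3 * ((I : ℚ) ^ 2 + (K : ℚ) ^ 2) := by
      rw [hRQ, hJQ, hIQ, hKQ]; linear_combination N ^ 2 * h
    exact_mod_cast this
  obtain ⟨h1, h2, h3, h4⟩ := descent _ R J I K le_rfl hint
  have e1 : r * N = 0 := by rw [← hRQ, h1]; simp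
  have e2 : j * N = 0 := by rw [← hJQ, h2]; simp
  have e3 : i * N = 0 := by rw [← hIQ, h3]; simp
  have e4 : k * N = 0 := by rw [← hKQ, h4]; simp
  exact ⟨by simpa [hNne] using mul_eq_zero.mp e1,
         by simpa [hNne] using mul_eq_zero.mp e2,
         by simpa [hNne] using mul_eq_zero.mp e3,
         by simpa [hNne] using mul_eq_zero.mp e4⟩

/-- The quaternion algebra `B₆ = (3, −1 / ℚ)` of discriminant 6 is a division algebra:
every nonzero element is invertible. -/
theorem B6_is_division_algebra :
    ∀ x : ℍ[ℚ, 3, -1], x ≠ 0 → IsUnit x := by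
  intro x hx
  set n : ℚ := x.re ^ 2 - 3 * x.imI ^ 2 + x.imJ ^ 2 - 3 * x.imK ^ 2 with hn
  have hmul : x * star x = (n : ℍ[ℚ, 3, -1]) := by
    rw [QuaternionAlgebra.mul_star_eq_coe]
    congr 1
    simp [QuaternionAlgebra.re_mul, hn]
    ring
  have hnne : n ≠ 0 := by
    intro h0
    have heq : x.re ^ 2 + x.imJ ^ 2 = 3 * (x.imI ^ 2 + x.imK ^ 2) := by
      rw [hn] at h0; linarith
    obtain ⟨h1, h2, h3, h4⟩ := rat_descent _ _ _ _ heq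
    apply hx
    ext <;> assumption
  refine isUnit_iff_exists.mpr ⟨n⁻¹ • star x, ?_, ?_⟩
  · rw [Algebra.mul_smul_comm, hmul, QuaternionAlgebra.smul_coe, inv_mul_cancel₀ hnne,
      QuaternionAlgebra.coe_one]
  · rw [Algebra.smul_mul_assoc, star_comm_self', hmul, QuaternionAlgebra.smul_coe,
      inv_mul_cancel₀ hnne, QuaternionAlgebra.coe_one]
end

section
/- For every real λ with 0 < λ < 1, the improper integral ∫₁^∞ dx / √(x(x−1)(x−λ)) converges and ₂F₁(1/2, 1/2; 1; λ) = (1/π) ∫₁^∞ dx / √(x(x−1)(x−λ)). -/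
open Finset MeasureTheory

/-- The Pochhammer symbol `(a)_k = a(a+1)⋯(a+k−1)`. -/
noncomputable def poch (a : ℝ) (k : ℕ) : ℝ := ∏ i ∈ Finset.range k, (a + i)

/-- The Gauss hypergeometric series `₂F₁(a, b; c; t)`. -/
noncomputable def F21 (a b c t : ℝ) : ℝ :=
  ∑' k : ℕ, poch a k * poch b k / (poch c k * (Nat.factorial k)) * t ^ k

noncomputable def hc (k : ℕ) : ℝ := poch (1/2) k / (Nat.factorial k)

lemma poch_zero (a : ℝ) : poch a 0 = 1 := by simp [poch]

lemma poch_succ (a : ℝ) (k : ℕ) : poch a (k+1) = poch a k * (a + k) := by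
  simp [poch, Finset.prod_range_succ]

lemma poch_one (k : ℕ) : poch 1 k = Nat.factorial k := by
  induction k with
  | zero => simp [poch]
  | succ n ih => rw [poch_succ, ih, Nat.factorial_succ]; push_cast; ring

lemma poch_half_pos (k : ℕ) : 0 < poch (1/2) k := by
  apply Finset.prod_pos
  intro i _
  positivity

lemma hc_zero : hc 0 = 1 := by simp [hc, poch_zero]

lemma hc_pos (k : ℕ) : 0 < hc k := by
  apply div_pos (poch_half_pos k)
  exact_mod_cast Nat.factorial_pos k

lemma hc_succ (k : ℕ) : hc (k+1) * (k+1) = hc k * (1/2 + k) := by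
  have hk : (Nat.factorial k : ℝ) ≠ 0 := by exact_mod_cast (Nat.factorial_pos k).ne'
  have hk1 : ((Nat.factorial (k+1) : ℝ)) = (k+1) * Nat.factorial k := by
    rw [Nat.factorial_succ]; push_cast; ring
  rw [hc, hc, poch_succ, hk1]
  field_simp

lemma hc_le_one (k : ℕ) : hc k ≤ 1 := by
  induction k with
  | zero => simp [hc_zero]
  | succ n ih =>
    have h1 : hc (n+1) = hc n * ((1/2 + n) / (n+1)) := by
      have := hc_succ n
      have hn : ((n:ℝ)+1) ≠ 0 := by positivity
      field_simp at this ⊢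
      linarith [this]
    rw [h1]
    have h2 : ((1:ℝ)/2 + n) / (n+1) ≤ 1 := by
      rw [div_le_one (by positivity)]; linarith
    calc hc n * ((1/2 + n) / (n+1)) ≤ 1 * 1 :=
      mul_le_mul ih h2 (by positivity) zero_le_one
    _ = 1 := by ring

lemma hc_summable {u : ℝ} (hu : |u| < 1) : Summable (fun k => hc k * u ^ k) := by
  apply Summable.of_norm_bounded (g := fun k => |u| ^ k)
    (summable_geometric_of_lt_one (abs_nonneg u) hu)
  intro k
  rw [norm_mul, norm_pow]
  calc ‖hc k‖ * |u| ^ k ≤ 1 * |u| ^ k := by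
        apply mul_le_mul_of_nonneg_right _ (by positivity)
        rw [Real.norm_eq_abs, abs_of_pos (hc_pos k)]; exact hc_le_one k
    _ = |u| ^ k := one_mul _

lemma deriv_bound_summable {r : ℝ} (h0 : 0 ≤ r) (hr : r < 1) :
    Summable (fun k : ℕ => (k : ℝ) * r ^ (k - 1)) := by
  rw [← summable_nat_add_iff 1]
  have : (fun k : ℕ => ((k + 1 : ℕ) : ℝ) * r ^ ((k + 1) - 1)) =
      (fun k : ℕ => (k : ℝ) * r ^ k + r ^ k) := by
    funext k; simp [Nat.add_sub_cancel]; push_cast; ring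
  rw [this]
  have hr' : ‖r‖ < 1 := by rwa [Real.norm_eq_abs, abs_of_nonneg h0]
  have h1 : Summable (fun k : ℕ => (k : ℝ) * r ^ k) := by
    have := summable_pow_mul_geometric_of_norm_lt_one (R := ℝ) 1 hr'
    simpa using this
  exact h1.add (summable_geometric_of_norm_lt_one hr')

lemma hc_deriv_summable {y : ℝ} (hy : |y| < 1) :
    Summable (fun k : ℕ => hc k * ((k : ℝ) * y ^ (k - 1))) := by
  apply Summable.of_norm_bounded (g := fun k : ℕ => (k : ℝ) * |y| ^ (k - 1))
    (deriv_bound_summable (abs_nonneg y) hy)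
  intro k
  rw [norm_mul, norm_mul, norm_pow, Real.norm_eq_abs, Real.norm_eq_abs,
    abs_of_pos (hc_pos k), Nat.abs_cast]
  calc hc k * ((k:ℝ) * |y| ^ (k-1)) ≤ 1 * ((k:ℝ) * |y| ^ (k-1)) := by
        apply mul_le_mul_of_nonneg_right (hc_le_one k) (by positivity)
    _ = (k:ℝ) * |y| ^ (k-1) := one_mul _

lemma hc_key {y : ℝ} (hy : |y| < 1) :
    (1 - y) * (∑' k : ℕ, hc k * ((k : ℝ) * y ^ (k - 1))) =
      (∑' k : ℕ, hc k * y ^ k) / 2 := by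
  have hD : Summable (fun k : ℕ => hc k * ((k : ℝ) * y ^ (k - 1))) := hc_deriv_summable hy
  have hH : Summable (fun k : ℕ => hc k * y ^ k) := hc_summable hy
  have shift : (∑' k : ℕ, hc k * ((k : ℝ) * y ^ (k - 1))) =
      1/2 * (∑' k : ℕ, hc k * y ^ k) + y * (∑' k : ℕ, hc k * ((k : ℝ) * y ^ (k - 1))) := by
    conv_lhs => rw [Summable.tsum_eq_zero_add hD]
    have heq : ∀ k : ℕ, hc (k+1) * (((k+1 : ℕ) : ℝ) * y ^ ((k+1) - 1)) =
        1/2 * (hc k * y ^ k) + y * (hc k * ((k : ℝ) * y ^ (k - 1))) := by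
      intro k
      have h2 := hc_succ k
      have h1 : hc (k+1) * (((k+1 : ℕ) : ℝ)) = hc k * (1/2 + k) := by push_cast; linarith
      have hss : (k + 1 : ℕ) - 1 = k := by omega
      calc hc (k+1) * (((k+1 : ℕ) : ℝ) * y ^ ((k+1) - 1))
          = (hc (k+1) * ((k+1 : ℕ) : ℝ)) * y ^ k := by rw [hss]; ring
        _ = hc k * (1/2 + k) * y ^ k := by rw [h1]
        _ = 1/2 * (hc k * y ^ k) + y * (hc k * ((k : ℝ) * y ^ (k - 1))) := by
            cases k with
            | zero => simp; ring
            | succ n =>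
              have hss2 : (n + 1 : ℕ) - 1 = n := by omega
              rw [hss2]; push_cast; ring
    simp only [heq]
    rw [Summable.tsum_add (hH.mul_left (1/2)) (hD.mul_left y)]
    simp [tsum_mul_left]
  set D := ∑' k : ℕ, hc k * ((k : ℝ) * y ^ (k - 1))
  set H := ∑' k : ℕ, hc k * y ^ k
  linarith [shift]

lemma binom {u : ℝ} (h0 : 0 ≤ u) (h1 : u < 1) :
    ∑' k : ℕ, hc k * u ^ k = 1 / Real.sqrt (1 - u) := by
  set r : ℝ := (1 + u) / 2 with hrdef
  have hr1 : r < 1 := by rw [hrdef]; linarith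
  have hur : u < r := by rw [hrdef]; linarith
  have hr0 : 0 < r := by rw [hrdef]; linarith
  set t : Set ℝ := Set.Ioo (-r) r with htdef
  have h0t : (0:ℝ) ∈ t := by constructor <;> [linarith; linarith]
  have hut : u ∈ t := by constructor <;> [linarith; linarith]
  have habs : ∀ y ∈ t, |y| < 1 := by
    intro y hy; rw [abs_lt]; exact ⟨by linarith [hy.1], by linarith [hy.2]⟩
  -- derivative of the sum
  have hasH : ∀ y ∈ t, HasDerivAt (fun z => ∑' k : ℕ, hc k * z ^ k)
      (∑' k : ℕ, hc k * ((k : ℝ) * y ^ (k - 1))) y := by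
    intro y hy
    apply hasDerivAt_tsum_of_isPreconnected (deriv_bound_summable hr0.le hr1)
      isOpen_Ioo (convex_Ioo _ _).isPreconnected
      (fun k z _ => (hasDerivAt_pow k z).const_mul (hc k)) _ h0t
      (hc_summable (by norm_num)) hy
    intro k z hz
    rw [Real.norm_eq_abs, abs_mul, abs_mul, abs_of_pos (hc_pos k), Nat.abs_cast, abs_pow]
    have hz1 : |z| ≤ r := by
      rw [abs_le]; exact ⟨(hz.1).le, (hz.2).le⟩
    calc hc k * ((k:ℝ) * |z| ^ (k-1)) ≤ 1 * ((k:ℝ) * r ^ (k-1)) := by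
          apply mul_le_mul (hc_le_one k) _ (by positivity) zero_le_one
          exact mul_le_mul_of_nonneg_left (pow_le_pow_left₀ (abs_nonneg z) hz1 _) (Nat.cast_nonneg k)
      _ = (k:ℝ) * r ^ (k-1) := one_mul _
  -- the product function has zero derivative
  set Φ : ℝ → ℝ := fun y => (∑' k : ℕ, hc k * y ^ k) * Real.sqrt (1 - y) with hΦdef
  have hΦderiv : ∀ y ∈ t, HasDerivAt Φ 0 y := by
    intro y hy
    have hy1 : (0:ℝ) < 1 - y := by linarith [hy.2]
    have hs0 : Real.sqrt (1 - y) ≠ 0 := (Real.sqrt_pos.2 hy1).ne'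
    have hsq : HasDerivAt (fun z : ℝ => Real.sqrt (1 - z))
        (1 / (2 * Real.sqrt (1 - y)) * (-1)) y := by
      have inner : HasDerivAt (fun z : ℝ => 1 - z) (-1) y := by
        simpa using (hasDerivAt_id y).const_sub 1
      exact (Real.hasDerivAt_sqrt hy1.ne').comp y inner
    have := (hasH y hy).mul hsq
    convert this using 1
    · rfl
    · rfl
    · rfl
    have hkey := hc_key (habs y hy)
    have hsq2 : Real.sqrt (1 - y) ^ 2 = 1 - y := Real.sq_sqrt hy1.le
    set D := ∑' k : ℕ, hc k * ((k : ℝ) * y ^ (k - 1))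
    set H := ∑' k : ℕ, hc k * y ^ k
    have hH2 : H = 2 * Real.sqrt (1-y) ^ 2 * D := by rw [hsq2]; linarith [hkey]
    rw [hH2]
    field_simp
    ring
  -- constancy
  have hdiff : DifferentiableOn ℝ Φ t := fun y hy =>
    ((hΦderiv y hy).differentiableAt).differentiableWithinAt
  have hfzero : ∀ y ∈ t, fderivWithin ℝ Φ t y = 0 := by
    intro y hy
    rw [fderivWithin_of_isOpen isOpen_Ioo hy]
    have := (hΦderiv y hy).hasFDerivAt.fderiv
    rw [this]
    ext z
    simp
  have hconst := (convex_Ioo (-r) r).is_const_of_fderivWithin_eq_zero hdiff hfzero hut h0t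
  have hΦ0 : Φ 0 = 1 := by
    rw [hΦdef]
    simp only
    rw [show (∑' k : ℕ, hc k * (0:ℝ) ^ k) = 1 by
      rw [tsum_eq_single 0 (fun k hk => by simp [zero_pow hk])]; simp [hc_zero]]
    simp
  rw [hΦ0] at hconst
  have hs1 : (0:ℝ) < 1 - u := by linarith
  have hspos : 0 < Real.sqrt (1 - u) := Real.sqrt_pos.2 hs1
  rw [hΦdef] at hconst
  simp only at hconst
  field_simp at hconst ⊢
  linarith [hconst]

lemma realBeta {a b : ℝ} (ha : 0 < a) (hb : 0 < b) :
    IntegrableOn (fun x : ℝ => x ^ (a-1) * (1-x) ^ (b-1)) (Set.Ioo 0 1) ∧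
    ∫ x in Set.Ioo (0:ℝ) 1, x ^ (a-1) * (1-x) ^ (b-1) =
      Real.Gamma a * Real.Gamma b / Real.Gamma (a+b) := by
  have hpt : ∀ x ∈ Set.Ioo (0:ℝ) 1,
      (x : ℂ) ^ ((a:ℂ) - 1) * (1 - (x : ℂ)) ^ ((b:ℂ) - 1) =
        ((x ^ (a-1) * (1-x) ^ (b-1) : ℝ) : ℂ) := by
    intro x hx
    have h1 : ((x ^ (a-1) : ℝ) : ℂ) = (x : ℂ) ^ ((a:ℂ) - 1) := by
      rw [Complex.ofReal_cpow hx.1.le]; push_cast; ring_nf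
    have h2 : (((1-x) ^ (b-1) : ℝ) : ℂ) = ((1-x : ℝ) : ℂ) ^ ((b:ℂ) - 1) := by
      rw [Complex.ofReal_cpow (by linarith [hx.2] : (0:ℝ) ≤ 1 - x)]; push_cast; ring_nf
    rw [Complex.ofReal_mul, h1, h2]
    push_cast
    ring_nf
  have hci : IntegrableOn
      (fun x : ℝ => (x : ℂ) ^ ((a:ℂ) - 1) * (1 - (x : ℂ)) ^ ((b:ℂ) - 1)) (Set.Ioo 0 1) := by
    have := Complex.betaIntegral_convergent (u := a) (v := b) (by simpa using ha) (by simpa using hb)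
    rwa [intervalIntegrable_iff_integrableOn_Ioo_of_le (by norm_num)] at this
  have hri : IntegrableOn (fun x : ℝ => x ^ (a-1) * (1-x) ^ (b-1)) (Set.Ioo 0 1) := by
    have h2 : IntegrableOn (fun x : ℝ => ((x ^ (a-1) * (1-x) ^ (b-1) : ℝ) : ℂ)) (Set.Ioo 0 1) :=
      hci.congr_fun hpt measurableSet_Ioo
    have h3 : IntegrableOn (fun x : ℝ =>
        RCLike.re ((x ^ (a-1) * (1-x) ^ (b-1) : ℝ) : ℂ)) (Set.Ioo 0 1) := h2.re
    apply (integrableOn_congr_fun _ measurableSet_Ioo).mp h3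
    intro x _
    simp
  refine ⟨hri, ?_⟩
  have hG := Complex.Gamma_mul_Gamma_eq_betaIntegral
    (s := a) (t := b) (by simpa using ha) (by simpa using hb)
  have hbeta : Complex.betaIntegral a b = ((∫ x in Set.Ioo (0:ℝ) 1,
      x ^ (a-1) * (1-x) ^ (b-1) : ℝ) : ℂ) := by
    rw [Complex.betaIntegral, intervalIntegral.integral_of_le (by norm_num : (0:ℝ) ≤ 1),
      integral_Ioc_eq_integral_Ioo,
      setIntegral_congr_fun measurableSet_Ioo hpt]
    exact integral_ofReal
  rw [hbeta] at hG
  rw [show ((a:ℂ)+(b:ℂ)) = ((a+b:ℝ):ℂ) by push_cast; ring] at hG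
  rw [Complex.Gamma_ofReal, Complex.Gamma_ofReal, Complex.Gamma_ofReal] at hG
  push_cast at hG
  have hG' : Real.Gamma a * Real.Gamma b =
      Real.Gamma (a+b) * ∫ x in Set.Ioo (0:ℝ) 1, x ^ (a-1) * (1-x) ^ (b-1) := by
    exact_mod_cast hG
  have hne : Real.Gamma (a+b) ≠ 0 := (Real.Gamma_pos_of_pos (by linarith)).ne'
  field_simp
  linarith [hG']

lemma Gamma_half (k : ℕ) :
    Real.Gamma ((k:ℝ) + 1/2) = poch (1/2) k * Real.sqrt Real.pi := by
  induction k with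
  | zero => simpa [poch_zero] using Real.Gamma_one_half_eq
  | succ n ih =>
    have hne : ((n:ℝ) + 1/2) ≠ 0 := by positivity
    have : ((n+1 : ℕ):ℝ) + 1/2 = ((n:ℝ) + 1/2) + 1 := by push_cast; ring
    rw [this, Real.Gamma_add_one hne, ih, poch_succ]
    push_cast
    ring

lemma Ik (k : ℕ) :
    IntegrableOn (fun t : ℝ => t^k / Real.sqrt (t*(1-t))) (Set.Ioo 0 1) ∧
    ∫ t in Set.Ioo (0:ℝ) 1, t^k / Real.sqrt (t*(1-t)) = Real.pi * hc k := by
  have ha : (0:ℝ) < (k:ℝ) + 1/2 := by positivity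
  obtain ⟨hint, hval⟩ := realBeta (a := (k:ℝ) + 1/2) (b := 1/2) ha (by norm_num)
  have hpt : ∀ t ∈ Set.Ioo (0:ℝ) 1,
      t ^ (((k:ℝ) + 1/2) - 1) * (1-t) ^ ((1/2:ℝ) - 1) = t^k / Real.sqrt (t*(1-t)) := by
    intro t ht
    have ht0 : 0 < t := ht.1
    have ht1 : 0 < 1 - t := by linarith [ht.2]
    have e1 : t ^ (((k:ℝ) + 1/2) - 1) = t^k * (Real.sqrt t)⁻¹ := by
      rw [show ((k:ℝ) + 1/2) - 1 = (k:ℝ) + (-(1/2)) by ring, Real.rpow_add ht0,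
        Real.rpow_natCast, Real.rpow_neg ht0.le, Real.sqrt_eq_rpow]
    have e2 : (1-t) ^ ((1/2:ℝ) - 1) = (Real.sqrt (1-t))⁻¹ := by
      rw [show (1/2:ℝ) - 1 = -(1/2) by ring, Real.rpow_neg ht1.le, Real.sqrt_eq_rpow]
    rw [e1, e2, Real.sqrt_mul ht0.le]
    have hs1 : Real.sqrt t ≠ 0 := (Real.sqrt_pos.2 ht0).ne'
    have hs2 : Real.sqrt (1-t) ≠ 0 := (Real.sqrt_pos.2 ht1).ne'
    field_simp
  constructor
  · apply hint.congr_fun hpt measurableSet_Ioo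
  · rw [← setIntegral_congr_fun measurableSet_Ioo hpt, hval]
    have h1 : ((k:ℝ) + 1/2) + 1/2 = (k:ℝ) + 1 := by ring
    rw [h1, Real.Gamma_nat_eq_factorial, Gamma_half, Real.Gamma_one_half_eq]
    rw [hc]
    have : Real.sqrt Real.pi * Real.sqrt Real.pi = Real.pi :=
      Real.mul_self_sqrt Real.pi_pos.le
    field_simp
    nlinarith [this, poch_half_pos k]

lemma half01 {lam : ℝ} (h0 : 0 < lam) (h1 : lam < 1) :
    IntegrableOn (fun t : ℝ => 1 / Real.sqrt (t*(1-t)*(1-lam*t))) (Set.Ioo 0 1) ∧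
    ∫ t in Set.Ioo (0:ℝ) 1, 1 / Real.sqrt (t*(1-t)*(1-lam*t)) =
      Real.pi * ∑' k : ℕ, hc k ^ 2 * lam ^ k := by
  have hpt : ∀ t ∈ Set.Ioo (0:ℝ) 1,
      1 / Real.sqrt (t*(1-t)*(1-lam*t)) =
        ∑' k : ℕ, (hc k * lam ^ k) * (t^k / Real.sqrt (t*(1-t))) := by
    intro t ht
    have ht0 : 0 < t := ht.1
    have ht1 : 0 < 1 - t := by linarith [ht.2]
    have hu0 : 0 ≤ lam * t := by positivity
    have hu1 : lam * t < 1 := by nlinarith [ht.2]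
    have hsq : Real.sqrt (t*(1-t)*(1-lam*t)) =
        Real.sqrt (t*(1-t)) * Real.sqrt (1-lam*t) :=
      Real.sqrt_mul (by positivity) _
    calc 1 / Real.sqrt (t*(1-t)*(1-lam*t))
        = (1 / Real.sqrt (1 - lam*t)) * (1 / Real.sqrt (t*(1-t))) := by rw [hsq]; ring
      _ = (∑' k : ℕ, hc k * (lam*t)^k) * (1 / Real.sqrt (t*(1-t))) := by
          rw [binom hu0 hu1]
      _ = ∑' k : ℕ, (hc k * lam ^ k) * (t^k / Real.sqrt (t*(1-t))) := by
          rw [← tsum_mul_right]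
          apply tsum_congr
          intro k
          rw [mul_pow]
          ring
  have hmaj : IntegrableOn
      (fun t : ℝ => (Real.sqrt (1-lam))⁻¹ * (t^0 / Real.sqrt (t*(1-t)))) (Set.Ioo 0 1) :=
    (Ik 0).1.const_mul _
  have hmeas : AEStronglyMeasurable (fun t : ℝ => 1 / Real.sqrt (t*(1-t)*(1-lam*t)))
      (volume.restrict (Set.Ioo 0 1)) := by
    have hcont : Continuous fun t : ℝ => Real.sqrt (t*(1-t)*(1-lam*t)) :=
      Real.continuous_sqrt.comp (by continuity)
    simp only [one_div]
    exact (hcont.measurable.inv).aestronglyMeasurable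
  have hintg : IntegrableOn (fun t : ℝ => 1 / Real.sqrt (t*(1-t)*(1-lam*t))) (Set.Ioo 0 1) := by
    apply Integrable.mono' hmaj hmeas
    filter_upwards [ae_restrict_mem measurableSet_Ioo] with t ht
    have ht0 : 0 < t := ht.1
    have ht1 : 0 < 1 - t := by linarith [ht.2]
    have hl1 : 0 < 1 - lam := by linarith
    have hprod : 0 < t*(1-t)*(1-lam) := mul_pos (mul_pos ht0 ht1) hl1
    have hle : t*(1-t)*(1-lam) ≤ t*(1-t)*(1-lam*t) := by
      nlinarith [mul_nonneg (mul_nonneg ht0.le ht1.le) (mul_nonneg h0.le ht1.le)]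
    rw [Real.norm_eq_abs, abs_of_nonneg (by positivity)]
    have hs1 : 0 < Real.sqrt (t*(1-t)*(1-lam)) := Real.sqrt_pos.2 hprod
    have := one_div_le_one_div_of_le hs1 (Real.sqrt_le_sqrt hle)
    have hs2 : 0 < Real.sqrt (t*(1-t)) := Real.sqrt_pos.2 (mul_pos ht0 ht1)
    have hs3 : 0 < Real.sqrt (1-lam) := Real.sqrt_pos.2 hl1
    apply this.trans (le_of_eq ?_)
    rw [pow_zero, Real.sqrt_mul (le_of_lt (mul_pos ht0 ht1))]
    field_simp
  refine ⟨hintg, ?_⟩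
  rw [setIntegral_congr_fun measurableSet_Ioo hpt]
  have hFint : ∀ k : ℕ, Integrable
      (fun t : ℝ => (hc k * lam ^ k) * (t^k / Real.sqrt (t*(1-t))))
      (volume.restrict (Set.Ioo 0 1)) := fun k => (Ik k).1.const_mul _
  have hnorm : ∀ k : ℕ, (∫ t in Set.Ioo (0:ℝ) 1,
      ‖(hc k * lam ^ k) * (t^k / Real.sqrt (t*(1-t)))‖) =
      (hc k * lam ^ k) * (Real.pi * hc k) := by
    intro k
    rw [setIntegral_congr_fun measurableSet_Ioo
      (g := fun t : ℝ => (hc k * lam ^ k) * (t^k / Real.sqrt (t*(1-t)))) ?_]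
    · rw [integral_const_mul, (Ik k).2]
    · intro t ht
      have ht0 : 0 < t := ht.1
      have h1 : (0:ℝ) ≤ (hc k * lam ^ k) * (t^k / Real.sqrt (t*(1-t))) := by
        have := (hc_pos k).le
        have := Real.sqrt_nonneg (t*(1-t))
        positivity
      simp only [Real.norm_eq_abs, abs_of_nonneg h1]
  have hFsum : Summable (fun k : ℕ => ∫ t in Set.Ioo (0:ℝ) 1,
      ‖(hc k * lam ^ k) * (t^k / Real.sqrt (t*(1-t)))‖) := by
    simp only [hnorm]
    apply Summable.of_nonneg_of_le
      (fun k => mul_nonneg (mul_nonneg (hc_pos k).le (pow_nonneg h0.le k))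
        (mul_nonneg Real.pi_pos.le (hc_pos k).le))
      (fun k => ?_)
      ((summable_geometric_of_lt_one h0.le h1).mul_left Real.pi)
    have hck := hc_pos k
    have hck1 := hc_le_one k
    have hlk : (0:ℝ) ≤ lam ^ k := by positivity
    have hsq : hc k * hc k ≤ 1 := by nlinarith
    calc hc k * lam ^ k * (Real.pi * hc k) = (Real.pi * lam ^ k) * (hc k * hc k) := by ring
      _ ≤ (Real.pi * lam ^ k) * 1 :=
          mul_le_mul_of_nonneg_left hsq (by positivity)
      _ = Real.pi * lam ^ k := by ring
  have hswap := integral_tsum_of_summable_integral_norm hFint hFsum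
  rw [← hswap]
  have : ∀ k : ℕ, (∫ t in Set.Ioo (0:ℝ) 1,
      (hc k * lam ^ k) * (t^k / Real.sqrt (t*(1-t)))) = Real.pi * (hc k ^ 2 * lam ^ k) := by
    intro k
    rw [integral_const_mul, (Ik k).2]
    ring
  rw [tsum_congr this, tsum_mul_left]

lemma substIoi {lam : ℝ} (h0 : 0 < lam) (h1 : lam < 1) :
    IntegrableOn (fun x : ℝ => 1 / Real.sqrt (x*(x-1)*(x-lam))) (Set.Ioi 1) ∧
    ∫ x in Set.Ioi (1:ℝ), 1 / Real.sqrt (x*(x-1)*(x-lam)) =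
      ∫ t in Set.Ioo (0:ℝ) 1, 1 / Real.sqrt (t*(1-t)*(1-lam*t)) := by
  have himg : (fun t : ℝ => t⁻¹) '' Set.Ioo 0 1 = Set.Ioi 1 := by
    ext y
    constructor
    · rintro ⟨t, ⟨ht0, ht1⟩, rfl⟩
      exact Set.mem_Ioi.2 ((one_lt_inv₀ ht0).2 ht1)
    · intro hy
      have hy1 : (1:ℝ) < y := hy
      have hy0 : 0 < y := by linarith
      exact ⟨y⁻¹, ⟨by positivity, inv_lt_one_of_one_lt₀ hy1⟩, inv_inv y⟩
  have hderiv : ∀ t ∈ Set.Ioo (0:ℝ) 1,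
      HasDerivWithinAt (fun t : ℝ => t⁻¹) (-((t:ℝ)^2)⁻¹) (Set.Ioo 0 1) t :=
    fun t ht => (hasDerivAt_inv (ne_of_gt ht.1)).hasDerivWithinAt
  have hinj : Set.InjOn (fun t : ℝ => t⁻¹) (Set.Ioo 0 1) :=
    fun a _ b _ h => inv_injective h
  have hpt : ∀ t ∈ Set.Ioo (0:ℝ) 1,
      |(-((t:ℝ)^2)⁻¹)| • (1 / Real.sqrt (t⁻¹*(t⁻¹-1)*(t⁻¹-lam))) =
        1 / Real.sqrt (t*(1-t)*(1-lam*t)) := by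
    intro t ht
    have ht0 : 0 < t := ht.1
    have ht1 : 0 < 1 - t := by linarith [ht.2]
    have hlt : 0 < 1 - lam*t := by nlinarith [ht.2]
    have hA : 0 < t*(1-t)*(1-lam*t) := mul_pos (mul_pos ht0 ht1) hlt
    have harg : t⁻¹*(t⁻¹-1)*(t⁻¹-lam) = (t*(1-t)*(1-lam*t))/((t^2)^2) := by
      field_simp
    have hsq : Real.sqrt (t⁻¹*(t⁻¹-1)*(t⁻¹-lam)) =
        Real.sqrt (t*(1-t)*(1-lam*t)) / t^2 := by
      rw [harg, Real.sqrt_div hA.le, Real.sqrt_sq (sq_nonneg t)]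
    rw [hsq, abs_of_nonpos (neg_nonpos.2 (by positivity)), neg_neg, smul_eq_mul]
    have hsA : 0 < Real.sqrt (t*(1-t)*(1-lam*t)) := Real.sqrt_pos.2 hA
    field_simp
  have hii := integrableOn_image_iff_integrableOn_abs_deriv_smul
    measurableSet_Ioo hderiv hinj (fun x : ℝ => 1 / Real.sqrt (x*(x-1)*(x-lam)))
  have hval := integral_image_eq_integral_abs_deriv_smul
    measurableSet_Ioo hderiv hinj (fun x : ℝ => 1 / Real.sqrt (x*(x-1)*(x-lam)))
  rw [himg] at hii hval
  have hpt' : ∀ t ∈ Set.Ioo (0:ℝ) 1,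
      |(-((t:ℝ)^2)⁻¹)| • (1 / Real.sqrt (t⁻¹*(t⁻¹-1)*(t⁻¹-lam))) =
        1 / Real.sqrt (t*(1-t)*(1-lam*t)) := hpt
  constructor
  · rw [hii]
    apply ((half01 h0 h1).1.congr_fun _ measurableSet_Ioo)
    intro t ht
    exact (hpt' t ht).symm
  · rw [hval, setIntegral_congr_fun measurableSet_Ioo ?_]
    intro t ht
    exact hpt' t ht

/-- For `0 < λ < 1` the integral `∫₁^∞ dx/√(x(x−1)(x−λ))` converges and equals
`π · ₂F₁(1/2, 1/2; 1; λ)`. -/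
theorem F21_period_integral (lam : ℝ) (h0 : 0 < lam) (h1 : lam < 1) :
    IntegrableOn (fun x : ℝ => 1 / Real.sqrt (x * (x - 1) * (x - lam))) (Set.Ioi 1) ∧
      F21 (1 / 2) (1 / 2) 1 lam =
        (1 / Real.pi) * ∫ x in Set.Ioi (1 : ℝ), 1 / Real.sqrt (x * (x - 1) * (x - lam)) := by
  obtain ⟨hint, hval⟩ := substIoi h0 h1
  obtain ⟨_, hval01⟩ := half01 h0 h1
  have hF : F21 (1/2) (1/2) 1 lam = ∑' k : ℕ, hc k ^ 2 * lam ^ k := by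
    unfold F21
    apply tsum_congr
    intro k
    rw [poch_one]
    have hk : ((Nat.factorial k : ℝ)) ≠ 0 := by exact_mod_cast (Nat.factorial_pos k).ne'
    have : hc k ^ 2 = poch (1/2) k * poch (1/2) k /
        ((Nat.factorial k : ℝ) * (Nat.factorial k : ℝ)) := by
      rw [hc, div_pow]
      ring
    rw [this]
  refine ⟨hint, ?_⟩
  rw [hval, hval01, hF, one_div, ← mul_assoc, inv_mul_cancel₀ Real.pi_ne_zero, one_mul]
end

section
/- Let a, b, c be complex numbers with c not zero or a negative integer. The function F(t) = ₂F₁(a, b; c; t) = ∑_{k≥0} (a)_k(b)_k/((c)_k k!) t^k, holomorphic on the open unit disk in ℂ, satisfies the hypergeometric differential equation t(1−t) F''(t) + (c − (a+b+1)t) F'(t) − ab F(t) = 0 for all t with |t| < 1. -/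
open Finset

/-- The complex Pochhammer symbol `(a)_k = a(a+1)⋯(a+k−1)`. -/
noncomputable def pochC (a : ℂ) (k : ℕ) : ℂ := ∏ i ∈ Finset.range k, (a + i)

/-- The Gauss hypergeometric series `₂F₁(a, b; c; t)`. -/
noncomputable def F21C (a b c : ℂ) : ℂ → ℂ :=
  fun t => ∑' k : ℕ, pochC a k * pochC b k / (pochC c k * (Nat.factorial k : ℂ)) * t ^ k

open Filter

noncomputable def hypA (a b c : ℂ) (k : ℕ) : ℂ :=
  pochC a k * pochC b k / (pochC c k * (Nat.factorial k : ℂ))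

lemma pochC_ne_zero {c : ℂ} (hc : ∀ n : ℕ, c ≠ -(n : ℂ)) (k : ℕ) : pochC c k ≠ 0 := by
  rw [pochC, Finset.prod_ne_zero_iff]
  intro i _ h
  exact hc i (by linear_combination h)

lemma hypA_rec (a b c : ℂ) (hc : ∀ n : ℕ, c ≠ -(n : ℂ)) (k : ℕ) :
    hypA a b c (k+1) = hypA a b c k * ((a+k)*(b+k) / ((c+k)*((k:ℂ)+1))) := by
  have hck : c + (k:ℂ) ≠ 0 := by
    intro h; exact hc k (by linear_combination h)
  have hpc := pochC_ne_zero hc k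
  have hk1 : ((k:ℂ)+1) ≠ 0 := by
    have := Nat.cast_add_one_ne_zero (R := ℂ) k
    simpa using this
  have hfac : ((Nat.factorial k : ℕ) : ℂ) ≠ 0 := Nat.cast_ne_zero.2 (Nat.factorial_ne_zero k)
  simp only [hypA, pochC, Finset.prod_range_succ, Nat.factorial_succ]
  push_cast
  field_simp

lemma tendsto_quot {𝕜 : Type*} [RCLike 𝕜] (x y : 𝕜) :
    Tendsto (fun k : ℕ => (x + k)/(y + k)) atTop (nhds 1) := by
  have h0 : Tendsto (fun k : ℕ => (x - y)/(y + k)) atTop (nhds 0) := by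
    apply squeeze_zero_norm' (a := fun k : ℕ => ‖x - y‖ / ((k:ℝ) - ‖y‖))
    · filter_upwards [eventually_gt_atTop (Nat.ceil ‖y‖)] with k hk
      have hky : ‖y‖ < (k:ℝ) := lt_of_le_of_lt (Nat.le_ceil _) (by exact_mod_cast hk)
      have hnorm : (k:ℝ) - ‖y‖ ≤ ‖y + (k:𝕜)‖ := by
        have := norm_add_le (y + (k:𝕜)) (-y)
        have e : y + (k:𝕜) + -y = (k:𝕜) := by ring
        rw [e, RCLike.norm_natCast, norm_neg] at this
        linarith
      rw [norm_div]
      gcongr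
    · apply Tendsto.div_atTop tendsto_const_nhds
      apply tendsto_atTop_add_const_right
      exact tendsto_natCast_atTop_atTop
  have hev : ∀ᶠ k : ℕ in atTop, (x + k)/(y + k) = 1 + (x - y)/(y + k) := by
    filter_upwards [eventually_gt_atTop (Nat.ceil ‖y‖)] with k hk
    have hky : ‖y‖ < (k:ℝ) := lt_of_le_of_lt (Nat.le_ceil _) (by exact_mod_cast hk)
    have hne : y + (k:𝕜) ≠ 0 := by
      intro h
      have : ‖y‖ = (k:ℝ) := by
        have : y = -(k:𝕜) := by linear_combination h
        rw [this]; simp [RCLike.norm_natCast]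
      linarith
    field_simp
    ring
  rw [tendsto_congr' hev]
  simpa using tendsto_const_nhds.add h0

lemma norm_hypA_rec (a b c : ℂ) (hc : ∀ n : ℕ, c ≠ -(n : ℂ)) (k : ℕ) :
    ‖hypA a b c (k+1)‖ = ‖(a+k)*(b+k) / ((c+k)*((k:ℂ)+1))‖ * ‖hypA a b c k‖ := by
  rw [hypA_rec a b c hc k, norm_mul, mul_comm]

lemma tendsto_gnorm (a b c : ℂ) :
    Tendsto (fun k : ℕ => ‖(a+k)*(b+k) / ((c+k)*((k:ℂ)+1))‖) atTop (nhds 1) := by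
  have h : ∀ k : ℕ, (a+k)*(b+k) / ((c+k)*((k:ℂ)+1)) = ((a+k)/(c+k)) * ((b+k)/(1+(k:ℂ))) := by
    intro k
    rw [div_mul_div_comm]
    ring_nf
  simp_rw [h]
  have := ((tendsto_quot a c).mul (tendsto_quot b 1)).norm
  simpa using this

lemma summable_main (a b c : ℂ) (hc : ∀ n : ℕ, c ≠ -(n : ℂ)) (d : ℕ) (r : ℝ)
    (hr0 : 0 < r) (hr1 : r < 1) :
    Summable (fun k : ℕ => ((k:ℝ)+1)^d * ‖hypA a b c k‖ * r ^ k) := by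
  set l : ℝ := (r+1)/2 with hl
  have hl1 : l < 1 := by rw [hl]; linarith
  apply summable_of_ratio_norm_eventually_le hl1
  set q : ℕ → ℝ := fun k => (((k:ℝ)+2)/((k:ℝ)+1))^d * ‖(a+k)*(b+k) / ((c+k)*((k:ℂ)+1))‖ * r
    with hq
  have hqt : Tendsto q atTop (nhds r) := by
    have h1 : Tendsto (fun k : ℕ => ((k:ℝ)+2)/((k:ℝ)+1)) atTop (nhds 1) := by
      have := tendsto_quot (𝕜 := ℝ) 2 1
      refine this.congr fun k => ?_
      ring_nf
    have h2 := ((h1.pow d).mul (tendsto_gnorm a b c)).mul_const r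
    simpa only [one_pow, one_mul, mul_one] using h2
  have hev : ∀ᶠ k : ℕ in atTop, q k < l := hqt.eventually_lt_const (by rw [hl]; linarith)
  filter_upwards [hev] with k hk
  have hA := norm_hypA_rec a b c hc k
  have hk1 : (0:ℝ) < (k:ℝ)+1 := by positivity
  have hfk : (0:ℝ) ≤ ((k:ℝ)+1)^d * ‖hypA a b c k‖ * r ^ k := by positivity
  rw [Real.norm_of_nonneg (by positivity), Real.norm_of_nonneg hfk]
  have key : (((k+1:ℕ):ℝ)+1)^d * ‖hypA a b c (k+1)‖ * r ^ (k+1)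
      = q k * (((k:ℝ)+1)^d * ‖hypA a b c k‖ * r ^ k) := by
    rw [hA, hq]
    push_cast
    rw [div_pow, div_mul_eq_mul_div, div_mul_eq_mul_div, div_mul_eq_mul_div,
      eq_div_iff (ne_of_gt (by positivity : (0:ℝ) < ((k:ℝ)+1)^d))]
    ring
  rw [key]
  exact mul_le_mul_of_nonneg_right hk.le hfk

lemma summable_shift (a b c : ℂ) (hc : ∀ n : ℕ, c ≠ -(n : ℂ)) (P : ℕ → ℂ) (C : ℝ)
    (hP : ∀ k : ℕ, ‖P k‖ ≤ C * ((k:ℝ)+1)^2) (m : ℕ) (t : ℂ) (ht : ‖t‖ < 1) :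
    Summable (fun k : ℕ => P k * hypA a b c (k+m) * t ^ k) := by
  rcases eq_or_ne t 0 with rfl | ht0
  · apply summable_of_ne_finset_zero (s := {0})
    intro k hk
    have : k ≠ 0 := by simpa using hk
    simp [zero_pow this]
  · have hC : 0 ≤ C := le_trans (norm_nonneg (P 0)) (by simpa using hP 0)
    set r : ℝ := ‖t‖ with hr
    have hr0 : 0 < r := norm_pos_iff.2 ht0
    have hS : Summable (fun k : ℕ => (((k+m:ℕ):ℝ)+1)^2 * ‖hypA a b c (k+m)‖ * r ^ (k+m)) :=
      (summable_nat_add_iff m).2 (summable_main a b c hc 2 r hr0 ht)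
    apply Summable.of_norm_bounded ((hS.mul_left (C / r ^ m)))
    intro k
    have h1 : ‖P k * hypA a b c (k+m) * t ^ k‖ ≤ C * ((k:ℝ)+1)^2 * ‖hypA a b c (k+m)‖ * r ^ k := by
      rw [norm_mul, norm_mul, norm_pow]
      have := hP k
      have h2 : ‖P k‖ * ‖hypA a b c (k+m)‖ ≤ C * ((k:ℝ)+1)^2 * ‖hypA a b c (k+m)‖ :=
        mul_le_mul_of_nonneg_right this (norm_nonneg _)
      calc ‖P k‖ * ‖hypA a b c (k+m)‖ * ‖t‖ ^ k
          ≤ C * ((k:ℝ)+1)^2 * ‖hypA a b c (k+m)‖ * ‖t‖ ^ k :=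
            mul_le_mul_of_nonneg_right h2 (by positivity)
        _ = C * ((k:ℝ)+1)^2 * ‖hypA a b c (k+m)‖ * r ^ k := rfl
    refine h1.trans ?_
    have h3 : ((k:ℝ)+1)^2 ≤ (((k+m:ℕ):ℝ)+1)^2 := by
      apply pow_le_pow_left₀ (by positivity)
      push_cast; linarith
    have h4 : r ^ k = r ^ (k+m) / r ^ m := by
      rw [pow_add]; field_simp
    rw [h4, show C * ((k:ℝ)+1)^2 * ‖hypA a b c (k+m)‖ * (r ^ (k+m) / r ^ m)
        = C / r ^ m * (((k:ℝ)+1)^2 * ‖hypA a b c (k+m)‖ * r ^ (k+m)) from by ring]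
    gcongr

lemma key_deriv (A : ℕ → ℂ)
    (h : ∀ r : ℝ, 0 < r → r < 1 → Summable (fun k : ℕ => ((k:ℝ)+1) * ‖A k‖ * r ^ k))
    (t : ℂ) (ht : ‖t‖ < 1) :
    HasDerivAt (fun z : ℂ => ∑' k : ℕ, A k * z ^ k)
      (∑' k : ℕ, ((k:ℂ)+1) * A (k+1) * t ^ k) t := by
  set r : ℝ := (1 + ‖t‖)/2 with hrdef
  have hr0 : 0 < r := by have := norm_nonneg t; rw [hrdef]; linarith
  have hr1 : r < 1 := by rw [hrdef]; linarith
  have htr : ‖t‖ < r := by rw [hrdef]; linarith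
  set u : ℕ → ℝ := fun n => (1/r) * (((n:ℝ)+1) * ‖A n‖ * r ^ n) with hu
  have hus : Summable u := (h r hr0 hr1).mul_left _
  have hbound : ∀ n : ℕ, ∀ z : ℂ, z ∈ Metric.ball (0:ℂ) r →
      ‖A n * ((n:ℂ) * z ^ (n-1))‖ ≤ u n := by
    intro n z hz
    have hzr : ‖z‖ ≤ r := le_of_lt (by simpa [Metric.mem_ball] using hz)
    match n with
    | 0 => simp [hu]; positivity
    | (m+1) =>
      rw [norm_mul, norm_mul, norm_pow, Complex.norm_natCast]
      simp only [Nat.add_sub_cancel]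
      have h1 : ‖z‖ ^ m ≤ r ^ m := pow_le_pow_left₀ (norm_nonneg z) hzr m
      have h2 : ‖A (m+1)‖ * (((m+1:ℕ):ℝ) * ‖z‖ ^ m) ≤ ((m:ℝ)+1) * ‖A (m+1)‖ * r ^ m := by
        push_cast
        calc ‖A (m+1)‖ * (((m:ℝ)+1) * ‖z‖ ^ m) = ((m:ℝ)+1) * ‖A (m+1)‖ * ‖z‖ ^ m := by ring
          _ ≤ ((m:ℝ)+1) * ‖A (m+1)‖ * r ^ m := by gcongr
      refine h2.trans ?_
      show ((m:ℝ)+1) * ‖A (m+1)‖ * r ^ m ≤ 1/r * ((((m+1:ℕ):ℝ)+1) * ‖A (m+1)‖ * r ^ (m+1))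
      have heq : (1/r) * ((((m+1:ℕ):ℝ)+1) * ‖A (m+1)‖ * r ^ (m+1))
          = (((m:ℝ)+2) * ‖A (m+1)‖ * r ^ m) := by
        push_cast
        field_simp
        ring
      rw [heq]
      gcongr
      linarith
  have hg : ∀ n : ℕ, ∀ z : ℂ, z ∈ Metric.ball (0:ℂ) r →
      HasDerivAt (fun w : ℂ => A n * w ^ n) (A n * ((n:ℂ) * z ^ (n-1))) z :=
    fun n z _ => (hasDerivAt_pow n z).const_mul (A n)
  have htmem : t ∈ Metric.ball (0:ℂ) r := by simpa [Metric.mem_ball] using htr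
  have hg0 : Summable (fun n : ℕ => A n * t ^ n) := by
    apply Summable.of_norm_bounded (h r hr0 hr1)
    intro n
    rw [norm_mul, norm_pow]
    calc ‖A n‖ * ‖t‖ ^ n ≤ ‖A n‖ * r ^ n := by gcongr
      _ ≤ ((n:ℝ)+1) * ‖A n‖ * r ^ n := by
          have h0 : (0:ℝ) ≤ (n:ℝ) * (‖A n‖ * r ^ n) := by positivity
          nlinarith [h0]
  have main := hasDerivAt_tsum_of_isPreconnected hus Metric.isOpen_ball
    (convex_ball (0:ℂ) r).isPreconnected hg hbound htmem hg0 htmem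
  have hsum' : Summable (fun n : ℕ => A n * ((n:ℂ) * t ^ (n-1))) :=
    Summable.of_norm_bounded hus (fun n => hbound n t htmem)
  have hval : (∑' n : ℕ, A n * ((n:ℂ) * t ^ (n-1)))
      = ∑' k : ℕ, ((k:ℂ)+1) * A (k+1) * t ^ k := by
    rw [Summable.tsum_eq_zero_add hsum']
    simp only [Nat.cast_zero, pow_zero, zero_mul, mul_zero, zero_add]
    apply tsum_congr
    intro k
    simp only [Nat.add_sub_cancel]
    push_cast
    ring
  rw [← hval]
  exact main

lemma norm_nat_add_one (k : ℕ) : ‖((k:ℂ)+1)‖ = (k:ℝ)+1 := by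
  rw [show ((k:ℂ)+1) = ((k+1:ℕ):ℂ) by push_cast; ring, Complex.norm_natCast]
  push_cast; ring

lemma norm_nat_add_le (k : ℕ) (x : ℂ) : ‖((k:ℂ)+x)‖ ≤ (1+‖x‖) * ((k:ℝ)+1) := by
  have h := norm_add_le ((k:ℂ)) x
  rw [Complex.norm_natCast] at h
  have hk : (0:ℝ) ≤ (k:ℝ) := Nat.cast_nonneg k
  have hx : (0:ℝ) ≤ ‖x‖ := norm_nonneg x
  nlinarith

/-- If `c` is not zero or a negative integer, `₂F₁(a, b; c; ·)` is holomorphic on the unit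
disk and satisfies the hypergeometric differential equation
`t(1−t) F'' + (c − (a+b+1)t) F' − ab F = 0`. -/
theorem F21_hypergeometric_ODE (a b c : ℂ) (hc : ∀ n : ℕ, c ≠ -(n : ℂ)) :
    DifferentiableOn ℂ (F21C a b c) (Metric.ball 0 1) ∧
      ∀ t : ℂ, ‖t‖ < 1 →
        t * (1 - t) * deriv (deriv (F21C a b c)) t + (c - (a + b + 1) * t) * deriv (F21C a b c) t
          - a * b * F21C a b c t = 0 := by
  have hA : ∀ r : ℝ, 0 < r → r < 1 →
      Summable (fun k : ℕ => ((k:ℝ)+1) * ‖hypA a b c k‖ * r ^ k) := by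
    intro r hr0 hr1
    simpa [pow_one] using summable_main a b c hc 1 r hr0 hr1
  have hB : ∀ r : ℝ, 0 < r → r < 1 →
      Summable (fun k : ℕ => ((k:ℝ)+1) * ‖((k:ℂ)+1) * hypA a b c (k+1)‖ * r ^ k) := by
    intro r hr0 hr1
    have hS := ((summable_nat_add_iff 1).2 (summable_main a b c hc 2 r hr0 hr1)).mul_left (1/r)
    apply Summable.of_nonneg_of_le (fun k => by positivity) _ hS
    intro k
    rw [norm_mul, norm_nat_add_one]
    have heq : (1/r) * ((((k+1:ℕ):ℝ)+1)^2 * ‖hypA a b c (k+1)‖ * r ^ (k+1))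
        = (((k:ℝ)+2))^2 * ‖hypA a b c (k+1)‖ * r ^ k := by
      push_cast; field_simp; ring
    rw [heq]
    have h1 : ((k:ℝ)+1) * (((k:ℝ)+1) * ‖hypA a b c (k+1)‖) * r ^ k
        = ((k:ℝ)+1)^2 * ‖hypA a b c (k+1)‖ * r ^ k := by ring
    rw [h1]
    gcongr <;> linarith
  have hd1 : ∀ z : ℂ, ‖z‖ < 1 → HasDerivAt (F21C a b c)
      (∑' k : ℕ, ((k:ℂ)+1) * hypA a b c (k+1) * z ^ k) z :=
    fun z hz => key_deriv (hypA a b c) hA z hz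
  have hd2 : ∀ z : ℂ, ‖z‖ < 1 →
      HasDerivAt (fun w : ℂ => ∑' k : ℕ, ((k:ℂ)+1) * hypA a b c (k+1) * w ^ k)
      (∑' k : ℕ, ((k:ℂ)+1) * (((((k+1:ℕ):ℂ))+1) * hypA a b c (k+1+1)) * z ^ k) z :=
    fun z hz => key_deriv (fun k => ((k:ℂ)+1) * hypA a b c (k+1)) hB z hz
  refine ⟨fun z hz => ((hd1 z (by simpa [mem_ball_zero_iff] using hz)).differentiableAt).differentiableWithinAt, ?_⟩
  intro t ht
  -- summability of the various coefficient series at t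
  have Sum0 : Summable (fun k : ℕ => (1:ℂ) * hypA a b c (k+0) * t ^ k) := by
    apply summable_shift a b c hc _ 1 _ 0 t ht
    intro k
    have hk : (0:ℝ) ≤ (k:ℝ) := Nat.cast_nonneg k
    simp only [norm_one]
    nlinarith
  have SumS1 : Summable (fun k : ℕ => ((k:ℂ)+1) * hypA a b c (k+1) * t ^ k) := by
    apply summable_shift a b c hc _ 1 _ 1 t ht
    intro k
    have hk : (0:ℝ) ≤ (k:ℝ) := Nat.cast_nonneg k
    rw [norm_nat_add_one]
    nlinarith
  have SumT1 : Summable (fun k : ℕ => (k:ℂ) * ((k:ℂ)+1) * hypA a b c (k+1) * t ^ k) := by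
    apply summable_shift a b c hc _ 1 _ 1 t ht
    intro k
    have hk : (0:ℝ) ≤ (k:ℝ) := Nat.cast_nonneg k
    rw [norm_mul, Complex.norm_natCast, norm_nat_add_one]
    nlinarith
  have SumX : Summable (fun k : ℕ => ((k:ℂ)+1) * ((k:ℂ)+(a+b+1)) * hypA a b c (k+1) * t ^ k) := by
    apply summable_shift a b c hc _ ((1+‖a+b+1‖)) _ 1 t ht
    intro k
    have hk : (0:ℝ) ≤ (k:ℝ) := Nat.cast_nonneg k
    rw [norm_mul, norm_nat_add_one]
    have h1 := norm_nat_add_le k (a+b+1)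
    have h2 : (0:ℝ) ≤ ‖a+b+1‖ := norm_nonneg _
    nlinarith [norm_nonneg ((k:ℂ)+(a+b+1))]
  have SumV : Summable (fun k : ℕ => (k:ℂ) * ((k:ℂ)+(a+b)) * hypA a b c (k+0) * t ^ k) := by
    apply summable_shift a b c hc _ ((1+‖a+b‖)) _ 0 t ht
    intro k
    have hk : (0:ℝ) ≤ (k:ℝ) := Nat.cast_nonneg k
    rw [norm_mul, Complex.norm_natCast]
    have h1 := norm_nat_add_le k (a+b)
    have h2 : (0:ℝ) ≤ ‖a+b‖ := norm_nonneg _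
    nlinarith [norm_nonneg ((k:ℂ)+(a+b))]
  have SumL : Summable (fun k : ℕ => ((k:ℂ)+1) * ((k:ℂ)+c) * hypA a b c (k+1) * t ^ k) := by
    apply summable_shift a b c hc _ ((1+‖c‖)) _ 1 t ht
    intro k
    have hk : (0:ℝ) ≤ (k:ℝ) := Nat.cast_nonneg k
    rw [norm_mul, norm_nat_add_one]
    have h1 := norm_nat_add_le k c
    have h2 : (0:ℝ) ≤ ‖c‖ := norm_nonneg _
    nlinarith [norm_nonneg ((k:ℂ)+c)]
  have SumR : Summable (fun k : ℕ => ((k:ℂ)+a) * ((k:ℂ)+b) * hypA a b c (k+0) * t ^ k) := by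
    apply summable_shift a b c hc _ ((1+‖a‖)*(1+‖b‖)) _ 0 t ht
    intro k
    have hk : (0:ℝ) ≤ (k:ℝ) := Nat.cast_nonneg k
    rw [norm_mul]
    have h1 := norm_nat_add_le k a
    have h2 := norm_nat_add_le k b
    have h3 : (0:ℝ) ≤ ‖a‖ := norm_nonneg _
    have h4 : (0:ℝ) ≤ ‖b‖ := norm_nonneg _
    calc ‖(k:ℂ)+a‖ * ‖(k:ℂ)+b‖ ≤ ((1+‖a‖) * ((k:ℝ)+1)) * ((1+‖b‖) * ((k:ℝ)+1)) := by
          apply mul_le_mul h1 h2 (norm_nonneg _) (by positivity)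
      _ = (1+‖a‖)*(1+‖b‖) * ((k:ℝ)+1)^2 := by ring
  -- the tsum identities
  have h1 : t * (∑' k : ℕ, ((k:ℂ)+1) * (((((k+1:ℕ):ℂ))+1) * hypA a b c (k+1+1)) * t ^ k)
      = ∑' k : ℕ, (k:ℂ) * ((k:ℂ)+1) * hypA a b c (k+1) * t ^ k := by
    rw [← tsum_mul_left, Summable.tsum_eq_zero_add SumT1]
    simp only [Nat.cast_zero, zero_mul, zero_add, pow_zero]
    apply tsum_congr
    intro k
    push_cast
    ring
  have h2 : c * (∑' k : ℕ, ((k:ℂ)+1) * hypA a b c (k+1) * t ^ k)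
        + (∑' k : ℕ, (k:ℂ) * ((k:ℂ)+1) * hypA a b c (k+1) * t ^ k)
      = ∑' k : ℕ, ((k:ℂ)+1) * ((k:ℂ)+c) * hypA a b c (k+1) * t ^ k := by
    rw [← tsum_mul_left, ← Summable.tsum_add (SumS1.mul_left c) SumT1]
    apply tsum_congr
    intro k
    ring
  have h3 : (∑' k : ℕ, ((k:ℂ)+1) * ((k:ℂ)+(a+b+1)) * hypA a b c (k+1) * t ^ k)
      = (a+b+1) * (∑' k : ℕ, ((k:ℂ)+1) * hypA a b c (k+1) * t ^ k)
        + (∑' k : ℕ, (k:ℂ) * ((k:ℂ)+1) * hypA a b c (k+1) * t ^ k) := by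
    rw [← tsum_mul_left, ← Summable.tsum_add (SumS1.mul_left (a+b+1)) SumT1]
    apply tsum_congr
    intro k
    ring
  have h4 : t * (∑' k : ℕ, ((k:ℂ)+1) * ((k:ℂ)+(a+b+1)) * hypA a b c (k+1) * t ^ k)
      = ∑' k : ℕ, (k:ℂ) * ((k:ℂ)+(a+b)) * hypA a b c (k+0) * t ^ k := by
    rw [← tsum_mul_left, Summable.tsum_eq_zero_add SumV]
    simp only [Nat.cast_zero, zero_mul, zero_add, pow_zero]
    apply tsum_congr
    intro k
    push_cast
    ring
  have h5 : a * b * (∑' k : ℕ, (1:ℂ) * hypA a b c (k+0) * t ^ k)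
        + (∑' k : ℕ, (k:ℂ) * ((k:ℂ)+(a+b)) * hypA a b c (k+0) * t ^ k)
      = ∑' k : ℕ, ((k:ℂ)+a) * ((k:ℂ)+b) * hypA a b c (k+0) * t ^ k := by
    rw [← tsum_mul_left, ← Summable.tsum_add (Sum0.mul_left (a*b)) SumV]
    apply tsum_congr
    intro k
    ring
  have h6 : (∑' k : ℕ, ((k:ℂ)+1) * ((k:ℂ)+c) * hypA a b c (k+1) * t ^ k)
      = ∑' k : ℕ, ((k:ℂ)+a) * ((k:ℂ)+b) * hypA a b c (k+0) * t ^ k := by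
    apply tsum_congr
    intro k
    have hck : c + (k:ℂ) ≠ 0 := fun h => hc k (by linear_combination h)
    have hk1 : ((k:ℂ)+1) ≠ 0 := by
      have := Nat.cast_add_one_ne_zero (R := ℂ) k
      simpa using this
    rw [hypA_rec a b c hc k]
    field_simp
    ring
  have hF0 : F21C a b c t = ∑' k : ℕ, (1:ℂ) * hypA a b c (k+0) * t ^ k :=
    tsum_congr fun k => by rw [show hypA a b c (k+0) = hypA a b c k from rfl, hypA, one_mul]
  have hEq : deriv (F21C a b c) =ᶠ[nhds t]
      fun w : ℂ => ∑' k : ℕ, ((k:ℂ)+1) * hypA a b c (k+1) * w ^ k := by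
    filter_upwards [Metric.isOpen_ball.mem_nhds
      (show t ∈ Metric.ball (0:ℂ) 1 by simpa [mem_ball_zero_iff] using ht)] with z hz
    exact (hd1 z (by simpa [mem_ball_zero_iff] using hz)).deriv
  have hdd : deriv (deriv (F21C a b c)) t
      = ∑' k : ℕ, ((k:ℂ)+1) * (((((k+1:ℕ):ℂ))+1) * hypA a b c (k+1+1)) * t ^ k := by
    rw [Filter.EventuallyEq.deriv_eq hEq]
    exact (hd2 t ht).deriv
  rw [hdd, (hd1 t ht).deriv, hF0]
  linear_combination (1-t)*h1 + h2 + t*h3 - h4 - h5 + h6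
end

section
/- Let F be a field of characteristic different from 2, and let σ ∈ F with σ(σ⁴ − 1) ≠ 0. Set λ = (σ + σ⁻¹)²/4. If (x, y) ∈ F² satisfies the Jacobi quartic equation y² = (1 − σ²x²)(1 − x²/σ²) and x ≠ 1/σ, then the point X = ((σ² + 1)/(2σ²)) · (x − σ)/(x − 1/σ), Y = ((σ⁴ − 1)/(4σ³)) · y/(x − 1/σ)² satisfies the Legendre equation Y² = X(X − 1)(X − λ). -/
/-- Change of variables from the Jacobi quartic `y² = (1 − σ²x²)(1 − x²/σ²)` to the Legendre
curve `Y² = X(X−1)(X−λ)` with `λ = (σ + σ⁻¹)²/4`. -/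
theorem jacobi_quartic_to_legendre {F : Type} [Field F] (h2 : (2 : F) ≠ 0)
    (σ : F) (hσ : σ * (σ ^ 4 - 1) ≠ 0) (x y : F)
    (hxy : y ^ 2 = (1 - σ ^ 2 * x ^ 2) * (1 - x ^ 2 / σ ^ 2)) (hx : x ≠ 1 / σ) :
    ((σ ^ 4 - 1) / (4 * σ ^ 3) * (y / (x - 1 / σ) ^ 2)) ^ 2 =
      ((σ ^ 2 + 1) / (2 * σ ^ 2) * ((x - σ) / (x - 1 / σ))) *
        ((σ ^ 2 + 1) / (2 * σ ^ 2) * ((x - σ) / (x - 1 / σ)) - 1) *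
        ((σ ^ 2 + 1) / (2 * σ ^ 2) * ((x - σ) / (x - 1 / σ)) - (σ + σ⁻¹) ^ 2 / 4) := by
  have hσ0 : σ ≠ 0 := fun h => hσ (by simp [h])
  have hxσ : x - 1 / σ ≠ 0 := sub_ne_zero.mpr hx
  have h4 : (4 : F) ≠ 0 := by
    intro h; apply h2
    have h22 : (4 : F) = 2 * 2 := by norm_num
    rw [h22] at h; exact mul_self_eq_zero.mp h
  have hxs : x * σ - 1 ≠ 0 := by
    intro h; apply hxσ; field_simp; linear_combination h
  have hxs' : σ * x - 1 ≠ 0 := by rwa [mul_comm]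
  field_simp at hxy ⊢
  linear_combination (8 * (σ ^ 4 - 1) ^ 2) * hxy
end

section
/- The matrices T₀ = [[1,2],[0,1]] and T₁ = [[1,0],[−2,1]] generate a free subgroup of SL₂(ℤ) of rank 2; that is, the group homomorphism from the free group on two generators to SL₂(ℤ) sending the generators to T₀ and T₁ respectively is injective. -/
open Matrix MatrixGroups

/-- `T₀ = [[1,2],[0,1]]` as an element of `SL(2,ℤ)`. -/
def T₀ : SL(2, ℤ) := ⟨!![1, 2; 0, 1], by norm_num [Matrix.det_fin_two_of]⟩

/-- `T₁ = [[1,0],[−2,1]]` as an element of `SL(2,ℤ)`. -/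
def T₁ : SL(2, ℤ) := ⟨!![1, 0; -2, 1], by norm_num [Matrix.det_fin_two_of]⟩

namespace Sanov

/-- inverse of T₀ -/
def U₀ : SL(2, ℤ) := ⟨!![1, -2; 0, 1], by norm_num [Matrix.det_fin_two_of]⟩
/-- inverse of T₁ -/
def U₁ : SL(2, ℤ) := ⟨!![1, 0; 2, 1], by norm_num [Matrix.det_fin_two_of]⟩

lemma T0_inv : T₀⁻¹ = U₀ := by
  apply inv_eq_of_mul_eq_one_right
  ext i j
  fin_cases i <;> fin_cases j <;>
    simp [T₀, U₀, Matrix.mul_apply, Fin.sum_univ_two] <;> rfl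

lemma T1_inv : T₁⁻¹ = U₁ := by
  apply inv_eq_of_mul_eq_one_right
  ext i j
  fin_cases i <;> fin_cases j <;>
    simp [T₁, U₁, Matrix.mul_apply, Fin.sum_univ_two] <;> rfl

abbrev Letter := Fin 2 × Bool

/-- the matrix of a letter -/
def F (ℓ : Letter) : SL(2, ℤ) :=
  if ℓ.1 = 0 then (if ℓ.2 then T₀ else U₀) else (if ℓ.2 then T₁ else U₁)

/-- ping-pong state assigned to a letter -/
def P (ℓ : Letter) (v : Fin 2 → ℤ) : Prop :=
  if ℓ.1 = 0 then (v 1) ^ 2 < (v 0) ^ 2 ∧ (if ℓ.2 then 0 < v 0 * v 1 else v 0 * v 1 < 0)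
  else (v 0) ^ 2 < (v 1) ^ 2 ∧ (if ℓ.2 then v 0 * v 1 < 0 else 0 < v 0 * v 1)

lemma key1 (x y : ℤ) (h : x ^ 2 < y ^ 2 ∨ (y ^ 2 < x ^ 2 ∧ 0 < x * y)) :
    y ^ 2 < (x + 2 * y) ^ 2 ∧ 0 < (x + 2 * y) * y := by
  rcases h with h | ⟨h1, h2⟩
  · constructor
    · nlinarith [sq_nonneg (x + y)]
    · nlinarith [sq_nonneg (x + y)]
  · constructor
    · nlinarith [sq_nonneg x, sq_nonneg y]
    · nlinarith [sq_nonneg y]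

lemma F_mulVec (ℓ : Letter) (v : Fin 2 → ℤ) :
    (↑(F ℓ) : Matrix (Fin 2) (Fin 2) ℤ) *ᵥ v =
      if ℓ.1 = 0 then (if ℓ.2 then ![v 0 + 2 * v 1, v 1] else ![v 0 + 2 * (-v 1), v 1])
      else (if ℓ.2 then ![v 0, v 1 + 2 * (-v 0)] else ![v 0, v 1 + 2 * v 0]) := by
  obtain ⟨i, b⟩ := ℓ
  fin_cases i <;> cases b <;>
    · funext j
      fin_cases j <;>
        simp [F, T₀, T₁, U₀, U₁, Matrix.mulVec, dotProduct, Fin.sum_univ_two] <;> ring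

/-- The ping-pong step. -/
lemma step (ℓ : Letter) (v : Fin 2 → ℤ)
    (h : (if ℓ.1 = 0 then (v 0) ^ 2 < (v 1) ^ 2 else (v 1) ^ 2 < (v 0) ^ 2) ∨ P ℓ v) :
    P ℓ ((↑(F ℓ) : Matrix (Fin 2) (Fin 2) ℤ) *ᵥ v) := by
  rw [F_mulVec]
  obtain ⟨i, b⟩ := ℓ
  fin_cases i <;> cases b <;> simp only [P] at h ⊢ <;> simp at h ⊢
  · -- (0, false) : x ↦ x - 2y, want product < 0 : use key1 with y := -y
    have := key1 (v 0) (-(v 1)) (by rcases h with h | h; · left; nlinarith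
                                    · right; exact ⟨by nlinarith, by nlinarith⟩)
    exact ⟨by nlinarith [this.1], by nlinarith [this.2]⟩
  · -- (0, true) : x ↦ x + 2y
    have := key1 (v 0) (v 1) (by rcases h with h | h; · left; nlinarith
                                 · right; exact ⟨by nlinarith, by nlinarith⟩)
    exact ⟨by nlinarith [this.1], by nlinarith [this.2]⟩
  · -- (1, false) : y ↦ y + 2x : key1 with x := y, y := x
    have := key1 (v 1) (v 0) (by rcases h with h | h; · left; nlinarith
                                 · right; exact ⟨by nlinarith, by nlinarith⟩)
    exact ⟨by nlinarith [this.1], by nlinarith [this.2]⟩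
  · -- (1, true) : y ↦ y - 2x : key1 with x := y, y := -x
    have := key1 (v 1) (-(v 0)) (by rcases h with h | h; · left; nlinarith
                                    · right; exact ⟨by nlinarith, by nlinarith⟩)
    exact ⟨by nlinarith [this.1], by nlinarith [this.2]⟩

def Ok (a b : Letter) : Prop := ¬(b.1 = a.1 ∧ b.2 = !a.2)

lemma prod_mulVec (L : List Letter) (v : Fin 2 → ℤ) :
    (↑((L.map F).prod) : Matrix (Fin 2) (Fin 2) ℤ) *ᵥ v =
      L.foldr (fun ℓ u => (↑(F ℓ) : Matrix (Fin 2) (Fin 2) ℤ) *ᵥ u) v := by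
  induction L generalizing v with
  | nil => simp [Matrix.one_mulVec]
  | cons a t ih =>
    simp only [List.map_cons, List.prod_cons, List.foldr_cons]
    rw [Matrix.SpecialLinearGroup.coe_mul, ← Matrix.mulVec_mulVec, ih]

lemma pre_of (ℓ ℓ' : Letter) (hok : Ok ℓ ℓ') (v : Fin 2 → ℤ) (h : P ℓ' v) :
    (if ℓ.1 = 0 then (v 0) ^ 2 < (v 1) ^ 2 else (v 1) ^ 2 < (v 0) ^ 2) ∨ P ℓ v := by
  by_cases hi : ℓ'.1 = ℓ.1
  · have hb : ℓ'.2 = ℓ.2 := by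
      simp only [Ok, hi, true_and] at hok
      cases hℓ : ℓ.2 <;> cases hℓ' : ℓ'.2 <;> simp_all
    right
    have : ℓ' = ℓ := Prod.ext hi hb
    rwa [this] at h
  · left
    obtain ⟨i, b⟩ := ℓ; obtain ⟨i', b'⟩ := ℓ'
    fin_cases i <;> fin_cases i' <;> simp_all [P]

lemma main : ∀ (L : List Letter) (ℓl : Letter) (v : Fin 2 → ℤ),
    List.Chain' Ok L → L.getLast? = some ℓl →
    (if ℓl.1 = 0 then (v 0) ^ 2 < (v 1) ^ 2 else (v 1) ^ 2 < (v 0) ^ 2) →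
    ∀ ℓh, L.head? = some ℓh →
    P ℓh (L.foldr (fun ℓ u => (↑(F ℓ) : Matrix (Fin 2) (Fin 2) ℤ) *ᵥ u) v)
  | [], _, _, _, h, _, _, _ => by simp at h
  | [ℓ], ℓl, v, _, hl, hv, ℓh, hh => by
    simp at hl hh
    subst hl hh
    exact step ℓ v (Or.inl hv)
  | ℓ :: ℓ' :: t, ℓl, v, hch, hl, hv, ℓh, hh => by
    simp at hh
    subst hh
    have hok : Ok ℓ ℓ' := (List.isChain_cons_cons.1 hch).1
    have ih := main (ℓ' :: t) ℓl v (List.isChain_cons_cons.1 hch).2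
      (by rwa [List.getLast?_cons_cons] at hl) hv ℓ' rfl
    simp only [List.foldr_cons] at ih ⊢
    exact step ℓ _ (pre_of ℓ ℓ' hok _ ih)

lemma reduce_tail {t : List Letter} {a : Letter} (h : FreeGroup.reduce (a :: t) = a :: t) :
    FreeGroup.reduce t = t := by
  rw [FreeGroup.reduce.cons] at h
  rcases hr : FreeGroup.reduce t with _ | ⟨hd, tl⟩
  · rw [hr] at h
    simp only at h
    have : t = [] := by simpa using congrArg List.tail h
    simp [this]
  · rw [hr] at h
    simp only at h
    split_ifs at h with hc
    · exfalso
      have hlen : (FreeGroup.reduce t).length ≤ t.length :=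
        (FreeGroup.reduce.red (L := t)).length_le
      rw [hr] at hlen
      have := congrArg List.length h
      simp at this hlen
      omega
    · have := congrArg List.tail h
      simp at this
      exact this

lemma chain_of_reduced : ∀ (L : List Letter), FreeGroup.reduce L = L → List.Chain' Ok L
  | [], _ => List.isChain_nil
  | [_], _ => List.isChain_singleton _
  | a :: b :: t, h => by
    refine List.isChain_cons_cons.2 ?_
    constructor
    · rintro ⟨h1, h2⟩
      have hb : b = (a.1, !a.2) := Prod.ext h1 h2
      refine FreeGroup.reduce.not (L₁ := a :: b :: t) (L₂ := []) (L₃ := t)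
        (x := a.1) (b := a.2) ?_
      rw [h, hb]
      rfl
    · exact chain_of_reduced (b :: t) (reduce_tail h)

end Sanov

open Sanov in
/-- `T₀` and `T₁` generate a free subgroup of rank 2 of `SL(2,ℤ)`: the homomorphism from
the free group on two generators sending the generators to `T₀` and `T₁` is injective. -/
theorem T0_T1_generate_free_group :
    Function.Injective (FreeGroup.lift (fun i : Fin 2 => if i = 0 then T₀ else T₁)) := by
  set g : Fin 2 → SL(2, ℤ) := fun i => if i = 0 then T₀ else T₁ with hg
  rw [injective_iff_map_eq_one]
  intro w hw
  by_contra hne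
  set L : List Letter := w.toWord with hL
  have hLne : L ≠ [] := fun h => hne (FreeGroup.toWord_eq_nil_iff.1 h)
  have hred : FreeGroup.reduce L = L := FreeGroup.reduce_toWord w
  have hch : List.Chain' Ok L := chain_of_reduced L hred
  -- the product of the letters is 1
  have hprod : (L.map F).prod = 1 := by
    have : FreeGroup.lift g w = (L.map (fun x => cond x.2 (g x.1) (g x.1)⁻¹)).prod := by
      conv_lhs => rw [← FreeGroup.mk_toWord (x := w)]
      exact FreeGroup.lift_mk
    rw [← hw, this]
    congr 1
    apply List.map_congr_left
    intro ℓ _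
    obtain ⟨i, b⟩ := ℓ
    fin_cases i <;> cases b <;>
      simp [F, g, T0_inv, T1_inv]
  obtain ⟨ℓl, hl⟩ := List.getLast?_isSome.2 hLne |> Option.isSome_iff_exists.1
  obtain ⟨ℓh, hh⟩ := List.isSome_head?.2 hLne |> Option.isSome_iff_exists.1
  set v : Fin 2 → ℤ := if ℓl.1 = 0 then ![0, 1] else ![1, 0] with hv
  have hbase : if ℓl.1 = 0 then (v 0) ^ 2 < (v 1) ^ 2 else (v 1) ^ 2 < (v 0) ^ 2 := by
    by_cases h0 : ℓl.1 = 0 <;> simp [hv, h0]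
  have hP := main L ℓl v hch hl hbase ℓh hh
  rw [← prod_mulVec, hprod] at hP
  simp only [Matrix.SpecialLinearGroup.coe_one, Matrix.one_mulVec] at hP
  -- but `v` has a zero coordinate, contradicting `P`
  obtain ⟨i, b⟩ := ℓh
  by_cases h0 : ℓl.1 = 0 <;>
    fin_cases i <;> cases b <;> simp_all [P, hv]
end
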